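/- Define f : ℂ → ℂ by f(0) = 0 and f(w) = w·exp(i·log‖w‖) for w ≠ 0, where log is the real natural logarithm and i is the imaginary unit. Then f is a bijection of ℂ and there exists a real number C ≥ 1 such that (1/C)·‖w − w'‖ ≤ ‖f(w) − f(w')‖ ≤ C·‖w − w'‖ for all w, w' ∈ ℂ. -/

import Mathlib

lemma chord (θ : ℝ) : ‖Complex.exp (Complex.I * θ) - 1‖ ≤ |θ| := by
  set z := Complex.exp (Complex.I * θ) - 1 with hz
  have h1 : Complex.exp (Complex.I * θ) = Complex.cos θ + Complex.sin θ * Complex.I := by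
    rw [mul_comm, Complex.exp_mul_I]
  have hre : z.re = Real.cos θ - 1 := by simp [hz, h1, Complex.cos_ofReal_re]
  have him : z.im = Real.sin θ := by simp [hz, h1, Complex.sin_ofReal_re]
  have hsq : ‖z‖ ^ 2 = 2 - 2 * Real.cos θ := by
    rw [Complex.sq_norm, Complex.normSq_apply, hre, him]
    nlinarith [Real.sin_sq_add_cos_sq θ]
  have hcos : 2 - 2 * Real.cos θ ≤ θ ^ 2 := by
    have h2 : Real.sin (θ/2) ^ 2 ≤ (θ/2) ^ 2 := Real.sin_sq_le_sq (x := θ/2)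
    have h3 := Real.cos_sq (θ/2)
    have h4 := Real.sin_sq_add_cos_sq (θ/2)
    have h5 : 2 * (θ/2) = θ := by ring
    rw [h5] at h3
    nlinarith
  have hle : ‖z‖ ^ 2 ≤ |θ| ^ 2 := by rw [hsq, sq_abs]; exact hcos
  calc ‖z‖ = Real.sqrt (‖z‖ ^ 2) := (Real.sqrt_sq (norm_nonneg _)).symm
    _ ≤ Real.sqrt (|θ| ^ 2) := Real.sqrt_le_sqrt hle
    _ = |θ| := Real.sqrt_sq (abs_nonneg _)

lemma norm_exp_I_mul_real' (t : ℝ) : ‖Complex.exp (Complex.I * (t:ℂ))‖ = 1 := by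
  rw [Complex.norm_exp]
  simp

lemma exp_I_sub (s t : ℝ) :
    ‖Complex.exp (Complex.I * (s:ℂ)) - Complex.exp (Complex.I * (t:ℂ))‖ ≤ |s - t| := by
  have key : Complex.exp (Complex.I * (s:ℂ))
      = Complex.exp (Complex.I * (t:ℂ)) * Complex.exp (Complex.I * ((s - t : ℝ):ℂ)) := by
    rw [← Complex.exp_add]
    congr 1
    push_cast
    ring
  have hfac : Complex.exp (Complex.I * (s:ℂ)) - Complex.exp (Complex.I * (t:ℂ))
      = Complex.exp (Complex.I * (t:ℂ)) * (Complex.exp (Complex.I * ((s - t : ℝ):ℂ)) - 1) := by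
    rw [mul_sub, mul_one, ← key]
  rw [hfac, norm_mul, norm_exp_I_mul_real', one_mul]
  exact chord _

noncomputable def twistAux (ε : ℝ) (w : ℂ) : ℂ :=
  if w = 0 then 0 else w * Complex.exp (Complex.I * ((ε * Real.log ‖w‖ : ℝ) : ℂ))

lemma norm_exp_I_mul_real (t : ℝ) : ‖Complex.exp (Complex.I * t)‖ = 1 := by
  rw [Complex.norm_exp]
  simp

lemma norm_twistAux (ε : ℝ) (w : ℂ) : ‖twistAux ε w‖ = ‖w‖ := by
  unfold twistAux
  split
  · simp [*]
  · rw [norm_mul, norm_exp_I_mul_real, mul_one]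

lemma twistAux_lip_aux (ε : ℝ) (hε : |ε| ≤ 1) (w w' : ℂ) (hw : w ≠ 0) (hw' : w' ≠ 0)
    (hle : ‖w'‖ ≤ ‖w‖) : ‖twistAux ε w - twistAux ε w'‖ ≤ 2 * ‖w - w'‖ := by
  have ha : (0:ℝ) < ‖w‖ := norm_pos_iff.mpr hw
  have hb : (0:ℝ) < ‖w'‖ := norm_pos_iff.mpr hw'
  set a := ‖w‖
  set b := ‖w'‖
  set Ea := Complex.exp (Complex.I * ((ε * Real.log a : ℝ) : ℂ))
  set Eb := Complex.exp (Complex.I * ((ε * Real.log b : ℝ) : ℂ))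
  have hsplit : twistAux ε w - twistAux ε w' = (w - w') * Ea + w' * (Ea - Eb) := by
    unfold twistAux; rw [if_neg hw, if_neg hw']; ring
  have hEdiff : ‖Ea - Eb‖ ≤ |ε * Real.log a - ε * Real.log b| :=
    exp_I_sub (ε * Real.log a) (ε * Real.log b)
  have hlog : b * |ε * Real.log a - ε * Real.log b| ≤ a - b := by
    have h1 : Real.log b ≤ Real.log a := Real.log_le_log hb hle
    have h2 : |ε * Real.log a - ε * Real.log b| ≤ Real.log a - Real.log b := by
      rw [← mul_sub, abs_mul]
      calc |ε| * |Real.log a - Real.log b| ≤ 1 * |Real.log a - Real.log b| := by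
            apply mul_le_mul_of_nonneg_right hε (abs_nonneg _)
        _ = Real.log a - Real.log b := by rw [one_mul, abs_of_nonneg (by linarith)]
    have h3 : Real.log a - Real.log b ≤ a / b - 1 := by
      have := Real.log_le_sub_one_of_pos (div_pos ha hb)
      rwa [Real.log_div (ne_of_gt ha) (ne_of_gt hb)] at this
    calc b * |ε * Real.log a - ε * Real.log b| ≤ b * (a / b - 1) := by
          apply mul_le_mul_of_nonneg_left (h2.trans h3) hb.le
      _ = a - b := by field_simp
  have hab : a - b ≤ ‖w - w'‖ := by
    have := norm_sub_norm_le w w'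
    linarith [this]
  calc ‖twistAux ε w - twistAux ε w'‖ = ‖(w - w') * Ea + w' * (Ea - Eb)‖ := by rw [hsplit]
    _ ≤ ‖(w - w') * Ea‖ + ‖w' * (Ea - Eb)‖ := norm_add_le _ _
    _ = ‖w - w'‖ + b * ‖Ea - Eb‖ := by rw [norm_mul, norm_mul, norm_exp_I_mul_real, mul_one]
    _ ≤ ‖w - w'‖ + b * |ε * Real.log a - ε * Real.log b| := by
        have := mul_le_mul_of_nonneg_left hEdiff hb.le
        linarith
    _ ≤ ‖w - w'‖ + (a - b) := by linarith
    _ ≤ 2 * ‖w - w'‖ := by linarith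

lemma twistAux_lip (ε : ℝ) (hε : |ε| ≤ 1) (w w' : ℂ) :
    ‖twistAux ε w - twistAux ε w'‖ ≤ 2 * ‖w - w'‖ := by
  rcases eq_or_ne w 0 with rfl | hw
  · rcases eq_or_ne w' 0 with rfl | hw'
    · simp [twistAux]
    · have h0 : twistAux ε 0 = 0 := by simp [twistAux]
      rw [h0, zero_sub, norm_neg, norm_twistAux]
      calc ‖w'‖ = ‖0 - w'‖ := by simp
        _ ≤ 2 * ‖(0:ℂ) - w'‖ := by nlinarith [norm_nonneg ((0:ℂ) - w')]
  · rcases eq_or_ne w' 0 with rfl | hw'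
    · have h0 : twistAux ε 0 = 0 := by simp [twistAux]
      rw [h0, sub_zero, norm_twistAux]
      calc ‖w‖ = ‖w - 0‖ := by simp
        _ ≤ 2 * ‖w - 0‖ := by nlinarith [norm_nonneg (w - (0:ℂ))]
    · rcases le_total ‖w'‖ ‖w‖ with h | h
      · exact twistAux_lip_aux ε hε w w' hw hw' h
      · rw [← norm_neg, neg_sub, ← norm_neg (w - w'), neg_sub]
        exact twistAux_lip_aux ε hε w' w hw' hw h

lemma twistAux_inv (ε δ : ℝ) (h : δ + ε = 0) (w : ℂ) : twistAux ε (twistAux δ w) = w := by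
  rcases eq_or_ne w 0 with rfl | hw
  · simp [twistAux]
  · have h1 : twistAux δ w ≠ 0 := by
      intro h0
      apply hw
      have := norm_twistAux δ w
      rw [h0, norm_zero] at this
      exact norm_eq_zero.mp this.symm
    rw [twistAux, if_neg h1, norm_twistAux, twistAux, if_neg hw, mul_assoc, ← Complex.exp_add]
    have heq : Complex.I * ((δ * Real.log ‖w‖ : ℝ) : ℂ) + Complex.I * ((ε * Real.log ‖w‖ : ℝ) : ℂ)
        = Complex.I * (((δ + ε) * Real.log ‖w‖ : ℝ) : ℂ) := by push_cast; ring
    rw [heq, h]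
    simp

/-- The planar twist map `(ρ, φ) ↦ (ρ, φ + ln ρ)`, i.e. `w ↦ w·exp(i·log‖w‖)` (and `0 ↦ 0`). -/
noncomputable def planarTwist (w : ℂ) : ℂ :=
  if w = 0 then 0 else w * Complex.exp (Complex.I * (Real.log ‖w‖ : ℂ))

lemma planarTwist_eq : planarTwist = twistAux 1 := by
  funext w
  simp [planarTwist, twistAux]

/-- The twist map `w ↦ w·exp(i·log‖w‖)` is a bi-Lipschitz bijection of the plane. -/
theorem planarTwist_bijective_biLipschitz :
    Function.Bijective planarTwist ∧
    ∃ C : ℝ, 1 ≤ C ∧ ∀ w w' : ℂ,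
      (1 / C) * ‖w - w'‖ ≤ ‖planarTwist w - planarTwist w'‖ ∧
        ‖planarTwist w - planarTwist w'‖ ≤ C * ‖w - w'‖ := by
  have hli : Function.LeftInverse (twistAux (-1)) planarTwist := by
    intro w
    rw [planarTwist_eq]
    exact twistAux_inv (-1) 1 (by norm_num) w
  have hri : Function.RightInverse (twistAux (-1)) planarTwist := by
    intro w
    rw [planarTwist_eq]
    exact twistAux_inv 1 (-1) (by norm_num) w
  refine ⟨⟨hli.injective, hri.surjective⟩, 2, by norm_num, fun w w' => ?_⟩
  constructor
  · have h := twistAux_lip (-1) (by norm_num) (planarTwist w) (planarTwist w')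
    rw [hli w, hli w'] at h
    linarith
  · rw [planarTwist_eq]
    exact twistAux_lip 1 (by norm_num) w w'
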